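/- For every compact metrizable space X, the space J(X) of max-min measures on X and the space I(X) of max-plus (idempotent) measures on X, both endowed with the weak* topology, are homeomorphic. -/

import Mathlib

set_option linter.unusedSectionVars false
set_option maxHeartbeats 1000000



def IsMaxMinMeasure {X : Type*} [TopologicalSpace X] (μ : C(X, ℝ) → ℝ) : Prop :=
  (∀ c : ℝ, μ (ContinuousMap.const X c) = c) ∧
  (∀ φ ψ : C(X, ℝ), μ (φ ⊔ ψ) = max (μ φ) (μ ψ)) ∧
  (∀ (c : ℝ) (φ : C(X, ℝ)), μ (ContinuousMap.const X c ⊓ φ) = min c (μ φ))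
/-- A functional `μ : C(X, ℝ) → ℝ` is a *max-plus (idempotent) measure* if it maps
constants to their values, turns pointwise maxima into maxima, and satisfies
`μ(c + φ) = c + μ φ` for constants `c`. -/
def IsMaxPlusMeasure {X : Type*} [TopologicalSpace X] (μ : C(X, ℝ) → ℝ) : Prop :=
  (∀ c : ℝ, μ (ContinuousMap.const X c) = c) ∧
  (∀ φ ψ : C(X, ℝ), μ (φ ⊔ ψ) = max (μ φ) (μ ψ)) ∧
  (∀ (c : ℝ) (φ : C(X, ℝ)), μ (ContinuousMap.const X c + φ) = c + μ φ)

namespace MMIP0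
open ContinuousMap
variable {X : Type*} [MetricSpace X] [CompactSpace X] [Nonempty X]
variable {μ ν : C(X, ℝ) → ℝ} {φ ψ : C(X, ℝ)} {c s ε : ℝ} {x : X} {k : ℕ}

noncomputable def lo (φ : C(X, ℝ)) : ℝ := sInf (Set.range φ)
lemma lo_le (φ : C(X, ℝ)) (x : X) : lo φ ≤ φ x :=
  csInf_le (isCompact_range φ.continuous).bddBelow ⟨x, rfl⟩
noncomputable def hi (φ : C(X, ℝ)) : ℝ := sSup (Set.range φ)
lemma le_hi (φ : C(X, ℝ)) (x : X) : φ x ≤ hi φ :=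
  le_csSup (isCompact_range φ.continuous).bddAbove ⟨x, rfl⟩
noncomputable def dm (x : X) : C(X, ℝ) :=
  ⟨fun y => dist x y, Continuous.dist continuous_const continuous_id⟩
noncomputable def rho (c : ℝ) (x : X) (k : ℕ) : C(X, ℝ) :=
  ContinuousMap.const X c ⊓ (ContinuousMap.const X (c+1) - (k : ℝ) • dm x)
lemma rho_apply (c : ℝ) (x : X) (k : ℕ) (y : X) :
    rho c x k y = min c (c + 1 - k * dist x y) := by simp [rho, dm]
lemma mono_of_sup (hs : ∀ φ ψ : C(X, ℝ), μ (φ ⊔ ψ) = max (μ φ) (μ ψ))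
    {φ ψ : C(X, ℝ)} (h : φ ≤ ψ) : μ φ ≤ μ ψ := by
  have := hs φ ψ
  rw [sup_eq_right.mpr h] at this
  rw [this]; exact le_max_left _ _

lemma rho_le_const : rho c x k ≤ ContinuousMap.const X c := by
  rw [ContinuousMap.le_def]
  intro y; rw [rho_apply]; simpa using min_le_left _ _

lemma mu_rho_le (h : IsMaxMinMeasure μ) : μ (rho c x k) ≤ c := by
  have := mono_of_sup h.2.1 (rho_le_const (c := c) (x := x) (k := k))
  rwa [h.1 c] at this

lemma rho_mono_c {c c' : ℝ} (hcc : c ≤ c') : rho c x k ≤ rho c' x k := by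
  rw [ContinuousMap.le_def]
  intro y; rw [rho_apply, rho_apply]
  exact min_le_min hcc (by linarith)

lemma exists_ball_lt (hcx : c < φ x) : ∃ δ > 0, ∀ y, dist x y < δ → c < φ y := by
  have hco : ContinuousAt φ x := φ.continuous.continuousAt
  obtain ⟨δ, hδ, H⟩ := Metric.continuousAt_iff.mp hco (φ x - c) (by linarith)
  refine ⟨δ, hδ, fun y hy => ?_⟩
  have := H (show dist y x < δ by rwa [dist_comm])
  rw [Real.dist_eq, abs_sub_lt_iff] at this
  linarith [this.2]

lemma exists_ball_gt (hcx : φ x < c) : ∃ δ > 0, ∀ y, dist x y < δ → φ y < c := by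
  have hco : ContinuousAt φ x := φ.continuous.continuousAt
  obtain ⟨δ, hδ, H⟩ := Metric.continuousAt_iff.mp hco (c - φ x) (by linarith)
  refine ⟨δ, hδ, fun y hy => ?_⟩
  have := H (show dist y x < δ by rwa [dist_comm])
  rw [Real.dist_eq, abs_sub_lt_iff] at this
  linarith [this.1]

lemma exists_rho_le (hcx : c < φ x) : ∃ k, rho c x k ≤ φ := by
  obtain ⟨δ, hδ, H⟩ := exists_ball_lt hcx
  refine ⟨⌈(c + 1 - lo φ)/δ⌉₊, ?_⟩
  rw [ContinuousMap.le_def]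
  intro y
  rw [rho_apply]
  rcases lt_or_ge (dist x y) δ with hd | hd
  · exact le_of_lt (lt_of_le_of_lt (min_le_left _ _) (H y hd))
  · refine le_trans (min_le_right _ _) ?_
    have h1 : ((c + 1 - lo φ)/δ) * δ ≤ ((⌈(c + 1 - lo φ)/δ⌉₊ : ℝ)) * dist x y :=
      mul_le_mul (Nat.le_ceil _) hd (le_of_lt hδ) (Nat.cast_nonneg _)
    rw [div_mul_cancel₀ _ (ne_of_gt hδ)] at h1
    have := lo_le φ y
    linarith

/-- The key covering lemma for max-min measures. -/
lemma cover_min (h : IsMaxMinMeasure μ) (hε : 0 < ε) (hs : s < μ φ) :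
    ∃ x₀ : X, ∀ k, s < μ (rho (φ x₀ + ε) x₀ k) := by
  by_contra hcon
  push_neg at hcon
  choose k hk using hcon
  have hδ : ∀ x : X, ∃ δ > 0, ∀ y, dist x y < δ → φ y < φ x + ε :=
    fun x => exists_ball_gt (by linarith : φ x < φ x + ε)
  choose δ hδpos hδball using hδ
  set U : X → Set X := fun x => Metric.ball x (min (δ x) (1/(k x + 1))) with hU
  have hUcov : (Set.univ : Set X) ⊆ ⋃ x, U x := fun y _ =>
    Set.mem_iUnion.mpr ⟨y, Metric.mem_ball_self (lt_min (hδpos y) (by positivity))⟩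
  obtain ⟨T, hT⟩ := isCompact_univ.elim_finite_subcover U
    (fun x => Metric.isOpen_ball) hUcov
  have hTne : T.Nonempty := by
    obtain ⟨y⟩ := (inferInstance : Nonempty X)
    obtain ⟨x, hx, -⟩ := Set.mem_iUnion₂.mp (hT (Set.mem_univ y))
    exact ⟨x, hx⟩
  set η : C(X, ℝ) := T.sup' hTne (fun x => rho (φ x + ε) x (k x)) with hη
  have hφη : φ ≤ η := by
    rw [ContinuousMap.le_def]
    intro y
    obtain ⟨x, hx, hyU⟩ := Set.mem_iUnion₂.mp (hT (Set.mem_univ y))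
    have h1 : φ y ≤ rho (φ x + ε) x (k x) y := by
      rw [rho_apply]
      have hyx : dist y x < min (δ x) (1/(k x + 1)) := Metric.mem_ball.mp hyU
      have h2 : φ y < φ x + ε := hδball x y
        (by rw [dist_comm]; exact lt_of_lt_of_le hyx (min_le_left _ _))
      have h3 : dist x y < 1/(k x + 1) := by
        rw [dist_comm]; exact lt_of_lt_of_le hyx (min_le_right _ _)
      have h4 : (k x : ℝ) * dist x y ≤ 1 := by
        have h5 : (k x : ℝ) * dist x y ≤ (k x : ℝ) * (1/(k x + 1)) :=
          mul_le_mul_of_nonneg_left (le_of_lt h3) (Nat.cast_nonneg _)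
        have h6 : (k x : ℝ) * (1/(k x + 1)) ≤ 1 := by
          rw [mul_one_div, div_le_one (by positivity)]; linarith
        linarith
      exact le_min (le_of_lt h2) (by linarith)
    refine le_trans h1 ?_
    have := Finset.le_sup' (f := fun x => rho (φ x + ε) x (k x) y) hx
    rw [hη, ContinuousMap.sup'_apply]; exact this
  let F : SupHom C(X, ℝ) ℝ := ⟨μ, fun a b => by rw [h.2.1 a b]⟩
  have hμη : μ η = T.sup' hTne (fun x => μ (rho (φ x + ε) x (k x))) :=
    map_finset_sup' F hTne _
  have hfin : μ φ ≤ s := by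
    refine le_trans (mono_of_sup h.2.1 hφη) ?_
    rw [hμη]
    exact Finset.sup'_le _ _ (fun x hx => hk x)
  linarith

/-- level transfer for max-min measures -/
lemma transfer (h : IsMaxMinMeasure μ) {c s : ℝ} {x : X}
    (H : ∀ k, s ≤ μ (rho c x k)) (c' : ℝ) (k : ℕ) :
    min c' s ≤ μ (rho c' x k) := by
  rcases le_or_gt c c' with hcc | hcc
  · calc min c' s ≤ s := min_le_right _ _
      _ ≤ μ (rho c x k) := H k
      _ ≤ μ (rho c' x k) := mono_of_sup h.2.1 (rho_mono_c hcc)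
  · -- c' < c : use the min-axiom
    set k' : ℕ := k + k * ⌈c - c'⌉₊ with hk'
    have key : ContinuousMap.const X c' ⊓ rho c x k' ≤ rho c' x k := by
      rw [ContinuousMap.le_def]
      intro y
      simp only [ContinuousMap.inf_apply, ContinuousMap.const_apply, rho_apply]
      rcases le_or_gt ((k:ℝ) * dist x y) 1 with hd | hd
      · have : c' ≤ c' + 1 - k * dist x y := by linarith
        refine le_trans (min_le_left _ _) (le_min le_rfl this)
      · refine le_trans (min_le_right _ _) ?_
        refine le_trans (min_le_right _ _) ?_
        have h2 : ((k':ℕ):ℝ) = (k:ℝ) + (k:ℝ) * ⌈c - c'⌉₊ := by rw [hk']; push_cast; ring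
        have h3 : (⌈c - c'⌉₊ : ℝ) ≥ c - c' := Nat.le_ceil _
        have h4 : (k:ℝ) * ⌈c - c'⌉₊ * dist x y ≥ c - c' := by
          have h5 : (k:ℝ) * dist x y * (⌈c - c'⌉₊:ℝ) ≥ 1 * (⌈c - c'⌉₊:ℝ) :=
            mul_le_mul_of_nonneg_right (le_of_lt hd) (Nat.cast_nonneg _)
          nlinarith
        have h6 : ((k':ℕ):ℝ) * dist x y
            = (k:ℝ) * dist x y + ((k:ℝ) * ⌈c - c'⌉₊) * dist x y := by
          rw [h2]; ring
        refine le_min (by linarith) (by linarith)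
    calc min c' s ≤ min c' (μ (rho c x k')) := min_le_min le_rfl (H k')
      _ = μ (ContinuousMap.const X c' ⊓ rho c x k') := (h.2.2 c' _).symm
      _ ≤ μ (rho c' x k) := mono_of_sup h.2.1 key


/-! ### max-plus side -/

noncomputable def th (x : X) (k : ℕ) : C(X, ℝ) :=
  0 ⊓ (ContinuousMap.const X (k : ℝ) - ((k : ℝ) * k) • dm x)

lemma th_apply (x : X) (k : ℕ) (y : X) :
    th x k y = min 0 ((k : ℝ) - k * k * dist x y) := by
  simp [th, dm]

lemma th_nonpos : th x k ≤ 0 := by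
  rw [ContinuousMap.le_def]
  intro y
  rw [th_apply]
  simpa using min_le_left _ _

lemma zero_eq_const : (0 : C(X, ℝ)) = ContinuousMap.const X 0 := rfl

lemma nu_th_le (hν : IsMaxPlusMeasure ν) : ν (th x k) ≤ 0 := by
  have := mono_of_sup hν.2.1 (th_nonpos (x := x) (k := k))
  rwa [zero_eq_const, hν.1 0] at this

lemma nu_zero (hν : IsMaxPlusMeasure ν) : ν 0 = 0 := by
  rw [zero_eq_const, hν.1 0]

lemma exists_th_le {φ : C(X, ℝ)} {x : X} {ε : ℝ} (hε : 0 < ε) :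
    ∃ K : ℕ, ∀ k ≥ K, ContinuousMap.const X (φ x - ε) + th x k ≤ φ := by
  obtain ⟨δ, hδ, H⟩ := exists_ball_lt (show φ x - ε < φ x by linarith)
  refine ⟨max ⌈2/δ⌉₊ ⌈φ x - ε - lo φ⌉₊, fun k hk => ?_⟩
  have hk1 : (⌈2/δ⌉₊ : ℝ) ≤ k := by
    exact_mod_cast Nat.cast_le.mpr (le_trans (le_max_left _ _) hk)
  have hk2 : (⌈φ x - ε - lo φ⌉₊ : ℝ) ≤ k := by
    exact_mod_cast Nat.cast_le.mpr (le_trans (le_max_right _ _) hk)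
  have hka : 2/δ ≤ (k:ℝ) := le_trans (Nat.le_ceil _) hk1
  have hkb : φ x - ε - lo φ ≤ (k:ℝ) := le_trans (Nat.le_ceil _) hk2
  rw [ContinuousMap.le_def]
  intro y
  simp only [ContinuousMap.add_apply, ContinuousMap.const_apply, th_apply]
  rcases lt_or_ge (dist x y) δ with hd | hd
  · have h1 : φ x - ε < φ y := H y hd
    have h2 : min (0:ℝ) ((k : ℝ) - k * k * dist x y) ≤ 0 := min_le_left _ _
    linarith
  · refine le_trans ?_ (lo_le φ y)
    have h2 : min (0:ℝ) ((k : ℝ) - k * k * dist x y) ≤ (k : ℝ) - k * k * dist x y :=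
      min_le_right _ _
    -- k*k*d - k ≥ k*(k*δ - 1) ≥ k ≥ φ x - ε - lo φ
    have hδ2 : (k:ℝ) * δ ≥ 2 := by
      have := mul_le_mul_of_nonneg_right hka (le_of_lt hδ)
      rwa [div_mul_cancel₀ _ (ne_of_gt hδ)] at this
    have hknn : (0:ℝ) ≤ k := Nat.cast_nonneg _
    have h3 : (k:ℝ) * k * dist x y ≥ (k:ℝ) * (k * δ) :=
      by nlinarith
    have h4 : (k:ℝ) * (k * δ) ≥ 2 * k := by nlinarith
    have : (k:ℝ) - k * k * dist x y ≤ -(k:ℝ) := by nlinarith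
    linarith

/-- The key covering lemma for max-plus measures. -/
lemma cover_plus (hν : IsMaxPlusMeasure ν) {φ : C(X, ℝ)} {s ε : ℝ}
    (hε : 0 < ε) (hs : s < ν φ) :
    ∃ x₀ : X, ∀ k, s < φ x₀ + ε + ν (th x₀ k) := by
  by_contra hcon
  push_neg at hcon
  choose k hk using hcon
  have hδ : ∀ x : X, ∃ δ > 0, ∀ y, dist x y < δ → φ y < φ x + ε :=
    fun x => exists_ball_gt (by linarith : φ x < φ x + ε)
  choose δ hδpos hδball using hδ
  set U : X → Set X := fun x => Metric.ball x (min (δ x) (1/(k x + 1))) with hU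
  have hUcov : (Set.univ : Set X) ⊆ ⋃ x, U x := fun y _ =>
    Set.mem_iUnion.mpr ⟨y, Metric.mem_ball_self (lt_min (hδpos y) (by positivity))⟩
  obtain ⟨T, hT⟩ := isCompact_univ.elim_finite_subcover U
    (fun x => Metric.isOpen_ball) hUcov
  have hTne : T.Nonempty := by
    obtain ⟨y⟩ := (inferInstance : Nonempty X)
    obtain ⟨x, hx, -⟩ := Set.mem_iUnion₂.mp (hT (Set.mem_univ y))
    exact ⟨x, hx⟩
  set η : C(X, ℝ) := T.sup' hTne
    (fun x => ContinuousMap.const X (φ x + ε) + th x (k x)) with hη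
  have hφη : φ ≤ η := by
    rw [ContinuousMap.le_def]
    intro y
    obtain ⟨x, hx, hyU⟩ := Set.mem_iUnion₂.mp (hT (Set.mem_univ y))
    have h1 : φ y ≤ (ContinuousMap.const X (φ x + ε) + th x (k x)) y := by
      simp only [ContinuousMap.add_apply, ContinuousMap.const_apply, th_apply]
      have hyx : dist y x < min (δ x) (1/(k x + 1)) := Metric.mem_ball.mp hyU
      have h2 : φ y < φ x + ε := hδball x y
        (by rw [dist_comm]; exact lt_of_lt_of_le hyx (min_le_left _ _))
      have h3 : dist x y < 1/(k x + 1) := by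
        rw [dist_comm]; exact lt_of_lt_of_le hyx (min_le_right _ _)
      have h4 : (k x : ℝ) * (k x) * dist x y ≤ k x := by
        have h5 : (k x:ℝ) * (k x) * dist x y ≤ (k x:ℝ) * (k x) * (1/(k x + 1)) := by
          apply mul_le_mul_of_nonneg_left (le_of_lt h3) (by positivity)
        have h6 : ((k x):ℝ) * (k x) * (1/(k x + 1)) ≤ k x := by
          rw [mul_one_div, div_le_iff₀ (by positivity : (0:ℝ) < (k x) + 1)]
          nlinarith [Nat.cast_nonneg (α := ℝ) (k x)]
        linarith
      have h7 : min (0:ℝ) ((k x : ℝ) - k x * k x * dist x y) = 0 :=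
        min_eq_left (by linarith)
      rw [h7]
      linarith
    refine le_trans h1 ?_
    have := Finset.le_sup'
      (f := fun x => (ContinuousMap.const X (φ x + ε) + th x (k x)) y) hx
    rw [hη, ContinuousMap.sup'_apply]; exact this
  let F : SupHom C(X, ℝ) ℝ := ⟨ν, fun a b => by rw [hν.2.1 a b]⟩
  have hμη : ν η = T.sup' hTne
      (fun x => ν (ContinuousMap.const X (φ x + ε) + th x (k x))) :=
    map_finset_sup' F hTne _
  have hfin : ν φ ≤ s := by
    refine le_trans (mono_of_sup hν.2.1 hφη) ?_
    rw [hμη]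
    refine Finset.sup'_le _ _ (fun x hx => ?_)
    rw [hν.2.2 (φ x + ε) (th x (k x))]
    exact hk x
  linarith


/-! ### gadgets and the transforms -/

noncomputable def psg (n : ℕ) (a b : ℝ) (φ : C(X, ℝ)) : C(X, ℝ) :=
  ContinuousMap.const X (b+1) ⊓
    ((n : ℝ) • ((φ - ContinuousMap.const X a) ⊔ 0) + ContinuousMap.const X (b-1))

lemma psg_apply (n : ℕ) (a b : ℝ) (φ : C(X, ℝ)) (y : X) :
    psg n a b φ y = min (b+1) (n * max (φ y - a) 0 + (b-1)) := by
  simp [psg]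

noncomputable def chg (n : ℕ) (a b : ℝ) (ψ : C(X, ℝ)) : C(X, ℝ) :=
  0 ⊓ ((n : ℝ) • ((ψ - ContinuousMap.const X a) ⊔ 0) + ContinuousMap.const X (b-1))

lemma chg_apply (n : ℕ) (a b : ℝ) (ψ : C(X, ℝ)) (y : X) :
    chg n a b ψ y = min 0 (n * max (ψ y - a) 0 + (b-1)) := by
  simp [chg]

noncomputable def gg (t : ℝ) : ℝ := -Real.log t
noncomputable def ff (r : ℝ) : ℝ := -Real.exp (-r)

lemma ff_neg (r : ℝ) : ff r < 0 := neg_neg_iff_pos.mpr (Real.exp_pos _)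
lemma ff_mono : StrictMono ff := fun a b h => by
  simp only [ff, neg_lt_neg_iff]
  exact Real.exp_lt_exp.mpr (by linarith)
lemma gg_anti {s t : ℝ} (hs : 0 < s) (h : s < t) : gg t < gg s := by
  simp only [gg, neg_lt_neg_iff]
  exact Real.log_lt_log hs h
lemma gg_neg_ff (r : ℝ) : gg (-(ff r)) = r := by
  simp [gg, ff, Real.log_exp]
lemma ff_gg {t : ℝ} (ht : 0 < t) : ff (gg t) = -t := by
  simp [gg, ff, Real.exp_log ht]
lemma neg_ff_pos (r : ℝ) : 0 < -ff r := by have := ff_neg r; linarith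

def Pp (μ : C(X, ℝ) → ℝ) (φ : C(X, ℝ)) (r : ℝ) : Prop :=
  ∃ t : ℝ, 0 < t ∧ ∃ n : ℕ, gg t < μ (psg n (r+t) (gg t) φ)

def Qq (ν : C(X, ℝ) → ℝ) (ψ : C(X, ℝ)) (r : ℝ) : Prop :=
  ∃ n : ℕ, ff r < ν (chg n r (ff r) ψ)

noncomputable def Phi (μ : C(X, ℝ) → ℝ) (φ : C(X, ℝ)) : ℝ := sSup {r | Pp μ φ r}
noncomputable def Psi (ν : C(X, ℝ) → ℝ) (ψ : C(X, ℝ)) : ℝ := sSup {r | Qq ν ψ r}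

/-! ### monotonicity of the gadgets -/

lemma psg_mono {n : ℕ} {a a' b b' : ℝ} (ha : a' ≤ a) (hb : b ≤ b') (φ : C(X, ℝ)) :
    psg n a b φ ≤ psg n a' b' φ := by
  rw [ContinuousMap.le_def]
  intro y
  rw [psg_apply, psg_apply]
  have h1 : max (φ y - a) 0 ≤ max (φ y - a') 0 :=
    max_le_max (by linarith) le_rfl
  have h2 : (n:ℝ) * max (φ y - a) 0 ≤ n * max (φ y - a') 0 :=
    mul_le_mul_of_nonneg_left h1 (Nat.cast_nonneg _)
  exact min_le_min (by linarith) (by linarith)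

lemma psg_const (n : ℕ) (a b c : ℝ) :
    psg n a b (ContinuousMap.const X c)
      = ContinuousMap.const X (min (b+1) (n * max (c - a) 0 + (b-1))) := by
  ext y; rw [psg_apply]; rfl

/-! ### characterization of Pp / Phi -/

lemma Pp_of_lt_lo (h : IsMaxMinMeasure μ) {r : ℝ} (hr : r < lo φ) : Pp μ φ r := by
  set t := (lo φ - r)/2 with ht
  have htpos : 0 < t := by rw [ht]; linarith
  refine ⟨t, htpos, ⌈2/t⌉₊, ?_⟩
  have hnt : (⌈2/t⌉₊ : ℝ) * t ≥ 2 := by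
    have h1 : 2/t ≤ (⌈2/t⌉₊ : ℝ) := Nat.le_ceil _
    have := mul_le_mul_of_nonneg_right h1 (le_of_lt htpos)
    rwa [div_mul_cancel₀ _ (ne_of_gt htpos)] at this
  have hconst : psg ⌈2/t⌉₊ (r+t) (gg t) φ = ContinuousMap.const X (gg t + 1) := by
    ext y
    rw [psg_apply]
    have h1 : t ≤ φ y - (r + t) := by
      have h0 := lo_le φ y
      rw [ht] at htpos ⊢
      linarith
    have h2 : max (φ y - (r+t)) 0 = φ y - (r+t) := max_eq_left (by linarith)
    rw [h2]
    have h3 : (⌈2/t⌉₊:ℝ) * (φ y - (r+t)) ≥ 2 := by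
      refine le_trans hnt (mul_le_mul_of_nonneg_left h1 (Nat.cast_nonneg _))
    have : gg t + 1 ≤ (⌈2/t⌉₊:ℝ) * (φ y - (r+t)) + (gg t - 1) := by linarith
    simp [min_eq_left this]
  rw [hconst, h.1]
  linarith

lemma Pp_lt_hi (h : IsMaxMinMeasure μ) {r : ℝ} (hP : Pp μ φ r) : r < hi φ := by
  by_contra hcon
  push_neg at hcon
  obtain ⟨t, ht, n, hn⟩ := hP
  have hconst : psg n (r+t) (gg t) φ = ContinuousMap.const X (gg t - 1) := by
    ext y
    rw [psg_apply]
    have h1 : φ y - (r + t) ≤ 0 := by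
      have h2 : φ y ≤ hi φ := le_hi φ y
      linarith
    rw [max_eq_right h1, mul_zero, zero_add]
    simp [min_eq_right (by linarith : gg t - 1 ≤ gg t + 1)]
  rw [hconst, h.1] at hn
  linarith

lemma Pp_down (h : IsMaxMinMeasure μ) {r r' : ℝ} (hrr : r' ≤ r) (hP : Pp μ φ r) :
    Pp μ φ r' := by
  obtain ⟨t, ht, n, hn⟩ := hP
  exact ⟨t, ht, n, lt_of_lt_of_le hn
    (mono_of_sup h.2.1 (psg_mono (by linarith) le_rfl φ))⟩

lemma Pp_open (h : IsMaxMinMeasure μ) {r : ℝ} (hP : Pp μ φ r) :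
    ∃ δ > 0, Pp μ φ (r + δ) := by
  obtain ⟨t, ht, n, hn⟩ := hP
  set s := μ (psg n (r+t) (gg t) φ) with hsdef
  have hcont : ContinuousAt gg t := by
    have : ContinuousAt Real.log t := Real.continuousAt_log (ne_of_gt ht)
    exact this.neg
  obtain ⟨δ₀, hδ₀, H⟩ := Metric.continuousAt_iff.mp hcont (s - gg t) (by linarith)
  set δ := min (t/4) (δ₀/4) with hδdef
  have hδpos : 0 < δ := lt_min (by linarith) (by linarith)
  refine ⟨δ, hδpos, t - 2*δ, by
      have : δ ≤ t/4 := min_le_left _ _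
      linarith, n, ?_⟩
  have ht' : 0 < t - 2*δ := by
    have : δ ≤ t/4 := min_le_left _ _
    linarith
  have hgg : gg (t - 2*δ) < s := by
    have hd : dist (t - 2*δ) t < δ₀ := by
      rw [Real.dist_eq]
      have h1 : δ ≤ δ₀/4 := min_le_right _ _
      rw [abs_sub_lt_iff]
      constructor <;> linarith
    have := H hd
    rw [Real.dist_eq, abs_sub_lt_iff] at this
    linarith [this.1]
  have hbb : gg t ≤ gg (t - 2*δ) := by
    rcases eq_or_lt_of_le (le_of_lt hδpos) with h0 | h0
    · exact le_of_lt (gg_anti ht' (by linarith))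
    · exact le_of_lt (gg_anti ht' (by linarith))
  calc gg (t - 2*δ) < s := hgg
    _ ≤ μ (psg n (r + δ + (t - 2*δ)) (gg (t - 2*δ)) φ) := by
        rw [hsdef]
        refine mono_of_sup h.2.1 (psg_mono (by linarith) hbb φ)

lemma Phi_S_nonempty (h : IsMaxMinMeasure μ) (φ : C(X, ℝ)) :
    {r | Pp μ φ r}.Nonempty :=
  ⟨lo φ - 1, Pp_of_lt_lo h (by linarith)⟩

lemma Phi_S_bdd (h : IsMaxMinMeasure μ) (φ : C(X, ℝ)) :
    BddAbove {r | Pp μ φ r} :=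
  ⟨hi φ, fun r hr => le_of_lt (Pp_lt_hi h hr)⟩

lemma lt_Phi_iff (h : IsMaxMinMeasure μ) {φ : C(X, ℝ)} {r : ℝ} :
    r < Phi μ φ ↔ Pp μ φ r := by
  constructor
  · intro hr
    obtain ⟨r₁, hr₁, hrr₁⟩ := exists_lt_of_lt_csSup (Phi_S_nonempty h φ) hr
    exact Pp_down h (le_of_lt hrr₁) hr₁
  · intro hP
    obtain ⟨δ, hδ, hP'⟩ := Pp_open h hP
    calc r < r + δ := by linarith
      _ ≤ Phi μ φ := le_csSup (Phi_S_bdd h φ) hP'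

/-! ### characterization of Qq / Psi -/

lemma plus_le (hν : IsMaxPlusMeasure ν) {φ ψ : C(X, ℝ)} {c : ℝ}
    (h : φ ≤ ContinuousMap.const X c + ψ) : ν φ ≤ c + ν ψ := by
  have := mono_of_sup hν.2.1 h
  rwa [hν.2.2 c ψ] at this

lemma Qq_of_lt_lo (hν : IsMaxPlusMeasure ν) {r : ℝ} (hr : r < lo ψ) : Qq ν ψ r := by
  set d := lo ψ - r with hd
  have hdpos : 0 < d := by rw [hd]; linarith
  refine ⟨⌈(1 - ff r)/d⌉₊, ?_⟩
  have hnd : (⌈(1 - ff r)/d⌉₊ : ℝ) * d ≥ 1 - ff r := by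
    have h1 : (1 - ff r)/d ≤ (⌈(1 - ff r)/d⌉₊ : ℝ) := Nat.le_ceil _
    have := mul_le_mul_of_nonneg_right h1 (le_of_lt hdpos)
    rwa [div_mul_cancel₀ _ (ne_of_gt hdpos)] at this
  have hconst : chg ⌈(1 - ff r)/d⌉₊ r (ff r) ψ = 0 := by
    ext y
    rw [chg_apply]
    have h1 : d ≤ ψ y - r := by
      have := lo_le ψ y; rw [hd]; linarith
    have h2 : max (ψ y - r) 0 = ψ y - r := max_eq_left (by linarith)
    rw [h2]
    have h3 : (⌈(1 - ff r)/d⌉₊:ℝ) * (ψ y - r) ≥ 1 - ff r := by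
      refine le_trans hnd (mul_le_mul_of_nonneg_left h1 (Nat.cast_nonneg _))
    have h4 : (0:ℝ) ≤ (⌈(1 - ff r)/d⌉₊:ℝ) * (ψ y - r) + (ff r - 1) := by linarith
    simp [min_eq_left h4]
  rw [hconst, nu_zero hν]
  exact ff_neg r

lemma Qq_lt_hi (hν : IsMaxPlusMeasure ν) {r : ℝ} (hQ : Qq ν ψ r) : r < hi ψ := by
  by_contra hcon
  push_neg at hcon
  obtain ⟨n, hn⟩ := hQ
  have hconst : chg n r (ff r) ψ = ContinuousMap.const X (ff r - 1) := by
    ext y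
    rw [chg_apply]
    have h1 : ψ y - r ≤ 0 := by have := le_hi ψ y; linarith
    rw [max_eq_right h1, mul_zero, zero_add]
    exact min_eq_right (by linarith [ff_neg r])
  rw [hconst, hν.1] at hn
  linarith

lemma Qq_down (hν : IsMaxPlusMeasure ν) {r r' : ℝ} (hrr : r' ≤ r) (hQ : Qq ν ψ r) :
    Qq ν ψ r' := by
  obtain ⟨n, hn⟩ := hQ
  refine ⟨n, ?_⟩
  have hffle : ff r' ≤ ff r := ff_mono.monotone hrr
  set c := ff r - ff r' with hc
  have hcnn : 0 ≤ c := by rw [hc]; linarith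
  have key : chg n r (ff r) ψ ≤ ContinuousMap.const X c + chg n r' (ff r') ψ := by
    rw [ContinuousMap.le_def]
    intro y
    simp only [ContinuousMap.add_apply, ContinuousMap.const_apply, chg_apply]
    have h1 : max (ψ y - r) 0 ≤ max (ψ y - r') 0 := max_le_max (by linarith) le_rfl
    have h2 : (n:ℝ) * max (ψ y - r) 0 ≤ n * max (ψ y - r') 0 :=
      mul_le_mul_of_nonneg_left h1 (Nat.cast_nonneg _)
    have h3 : min (0:ℝ) (n * max (ψ y - r) 0 + (ff r - 1)) ≤ 0 := min_le_left _ _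
    have h4 : min (0:ℝ) (n * max (ψ y - r) 0 + (ff r - 1))
        ≤ n * max (ψ y - r) 0 + (ff r - 1) := min_le_right _ _
    rw [hc]
    rcases le_total (0:ℝ) ((n:ℝ) * max (ψ y - r') 0 + (ff r' - 1)) with h5 | h5
    · rw [min_eq_left h5]; linarith
    · rw [min_eq_right h5]; linarith
  have := plus_le hν key
  have h6 : ff r < c + ν (chg n r' (ff r') ψ) := lt_of_lt_of_le hn this
  rw [hc] at h6
  linarith

lemma Qq_open (hν : IsMaxPlusMeasure ν) {r : ℝ} (hQ : Qq ν ψ r) :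
    ∃ δ > 0, Qq ν ψ (r + δ) := by
  obtain ⟨n, hn⟩ := hQ
  set s := ν (chg n r (ff r) ψ) with hsdef
  have hcont : ContinuousAt ff r := by
    have : Continuous ff := (Real.continuous_exp.comp continuous_neg).neg
    exact this.continuousAt
  obtain ⟨δ₀, hδ₀, H⟩ := Metric.continuousAt_iff.mp hcont ((s - ff r)/2) (by linarith)
  set δ := min (δ₀/2) ((s - ff r)/(2*(n+1))) with hδdef
  have hδpos : 0 < δ := lt_min (by linarith) (div_pos (by linarith) (by positivity))
  refine ⟨δ, hδpos, n, ?_⟩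
  have hffr : ff (r + δ) < ff r + (s - ff r)/2 := by
    have hd : dist (r + δ) r < δ₀ := by
      rw [Real.dist_eq, abs_sub_lt_iff]
      have : δ ≤ δ₀/2 := min_le_left _ _
      constructor <;> linarith
    have := H hd
    rw [Real.dist_eq, abs_sub_lt_iff] at this
    linarith [this.1]
  have hnδ : (n:ℝ) * δ < (s - ff r)/2 := by
    have h1 : δ ≤ (s - ff r)/(2*(n+1)) := min_le_right _ _
    have h2 : (n:ℝ) * δ ≤ (n:ℝ) * ((s - ff r)/(2*(n+1))) :=
      mul_le_mul_of_nonneg_left h1 (Nat.cast_nonneg _)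
    have h3 : (n:ℝ) * ((s - ff r)/(2*(n+1))) < (s - ff r)/2 := by
      have hpos : (0:ℝ) < 2*((n:ℝ)+1) := by positivity
      rw [mul_div_assoc', div_lt_div_iff₀ hpos two_pos]
      nlinarith [Nat.cast_nonneg (α := ℝ) n]
    linarith
  have hffle : ff r ≤ ff (r + δ) := ff_mono.monotone (by linarith)
  have key : chg n r (ff r) ψ
      ≤ ContinuousMap.const X ((n:ℝ)*δ) + chg n (r+δ) (ff (r+δ)) ψ := by
    rw [ContinuousMap.le_def]
    intro y
    simp only [ContinuousMap.add_apply, ContinuousMap.const_apply, chg_apply]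
    have h1 : max (ψ y - r) 0 - δ ≤ max (ψ y - (r+δ)) 0 := by
      rcases le_total (ψ y - r) 0 with h2 | h2
      · rw [max_eq_right h2]
        have : (0:ℝ) ≤ max (ψ y - (r+δ)) 0 := le_max_right _ _
        linarith
      · rw [max_eq_left h2]
        rcases le_total (ψ y - (r+δ)) 0 with h3 | h3
        · rw [max_eq_right h3]; linarith
        · rw [max_eq_left h3]; linarith
    have h2 : (n:ℝ) * max (ψ y - r) 0 - n * δ ≤ n * max (ψ y - (r+δ)) 0 := by
      have := mul_le_mul_of_nonneg_left h1 (Nat.cast_nonneg (α := ℝ) n)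
      rw [mul_sub] at this
      linarith
    have h3 : min (0:ℝ) (n * max (ψ y - r) 0 + (ff r - 1)) ≤ 0 := min_le_left _ _
    have h4 : min (0:ℝ) (n * max (ψ y - r) 0 + (ff r - 1))
        ≤ n * max (ψ y - r) 0 + (ff r - 1) := min_le_right _ _
    have hnδnn : (0:ℝ) ≤ (n:ℝ)*δ := by positivity
    rcases le_total (0:ℝ) ((n:ℝ) * max (ψ y - (r+δ)) 0 + (ff (r+δ) - 1)) with h5 | h5
    · rw [min_eq_left h5]; linarith
    · rw [min_eq_right h5]; linarith
  have h7 := plus_le hν key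
  have h8 : s - (n:ℝ)*δ ≤ ν (chg n (r+δ) (ff (r+δ)) ψ) := by
    rw [hsdef]; linarith
  calc ff (r+δ) < ff r + (s - ff r)/2 := hffr
    _ ≤ s - (n:ℝ)*δ := by linarith
    _ ≤ ν (chg n (r+δ) (ff (r+δ)) ψ) := h8

lemma Psi_S_nonempty (hν : IsMaxPlusMeasure ν) (ψ : C(X, ℝ)) :
    {r | Qq ν ψ r}.Nonempty :=
  ⟨lo ψ - 1, Qq_of_lt_lo hν (by linarith)⟩

lemma Psi_S_bdd (hν : IsMaxPlusMeasure ν) (ψ : C(X, ℝ)) :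
    BddAbove {r | Qq ν ψ r} :=
  ⟨hi ψ, fun r hr => le_of_lt (Qq_lt_hi hν hr)⟩

lemma lt_Psi_iff (hν : IsMaxPlusMeasure ν) {ψ : C(X, ℝ)} {r : ℝ} :
    r < Psi ν ψ ↔ Qq ν ψ r := by
  constructor
  · intro hr
    obtain ⟨r₁, hr₁, hrr₁⟩ := exists_lt_of_lt_csSup (Psi_S_nonempty hν ψ) hr
    exact Qq_down hν (le_of_lt hrr₁) hr₁
  · intro hQ
    obtain ⟨δ, hδ, hQ'⟩ := Qq_open hν hQ
    calc r < r + δ := by linarith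
      _ ≤ Psi ν ψ := le_csSup (Psi_S_bdd hν ψ) hQ'


/-! ### Phi is a max-plus measure -/

lemma Pp_const_iff (h : IsMaxMinMeasure μ) {c r : ℝ} :
    Pp μ (ContinuousMap.const X c) r ↔ r < c := by
  constructor
  · rintro ⟨t, ht, n, hn⟩
    rw [psg_const, h.1] at hn
    by_contra hcon
    push_neg at hcon
    have h1 : c - (r + t) ≤ 0 := by linarith
    rw [max_eq_right h1, mul_zero, zero_add,
      min_eq_right (by linarith : gg t - 1 ≤ gg t + 1)] at hn
    linarith
  · intro hrc
    set t := (c - r)/2 with ht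
    have htpos : 0 < t := by rw [ht]; linarith
    refine ⟨t, htpos, ⌈2/t⌉₊, ?_⟩
    rw [psg_const, h.1]
    have hnt : (⌈2/t⌉₊ : ℝ) * t ≥ 2 := by
      have h1 : 2/t ≤ (⌈2/t⌉₊ : ℝ) := Nat.le_ceil _
      have := mul_le_mul_of_nonneg_right h1 (le_of_lt htpos)
      rwa [div_mul_cancel₀ _ (ne_of_gt htpos)] at this
    have h2 : c - (r + t) = t := by rw [ht]; ring
    rw [h2, max_eq_left (le_of_lt htpos), min_eq_left (by linarith)]
    linarith

lemma psg_sup (n : ℕ) (a b : ℝ) (φ φ' : C(X, ℝ)) :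
    psg n a b (φ ⊔ φ') = psg n a b φ ⊔ psg n a b φ' := by
  ext y
  rw [ContinuousMap.sup_apply, psg_apply, psg_apply, psg_apply,
    ContinuousMap.sup_apply]
  have key : ∀ u v : ℝ, u ≤ v →
      min (b+1) ((n:ℝ) * max (u - a) 0 + (b-1))
        ≤ min (b+1) ((n:ℝ) * max (v - a) 0 + (b-1)) := by
    intro u v huv
    have h1 : max (u - a) 0 ≤ max (v - a) 0 := max_le_max (by linarith) le_rfl
    have h2 := mul_le_mul_of_nonneg_left h1 (Nat.cast_nonneg (α := ℝ) n)
    exact min_le_min le_rfl (by linarith)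
  rcases le_total (φ y) (φ' y) with h1 | h1
  · rw [max_eq_right h1, max_eq_right (key _ _ h1)]
  · rw [max_eq_left h1, max_eq_left (key _ _ h1)]

lemma Pp_sup_iff (h : IsMaxMinMeasure μ) {φ φ' : C(X, ℝ)} {r : ℝ} :
    Pp μ (φ ⊔ φ') r ↔ Pp μ φ r ∨ Pp μ φ' r := by
  constructor
  · rintro ⟨t, ht, n, hn⟩
    rw [psg_sup, h.2.1] at hn
    rcases lt_max_iff.mp hn with h1 | h1
    · exact Or.inl ⟨t, ht, n, h1⟩
    · exact Or.inr ⟨t, ht, n, h1⟩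
  · rintro (⟨t, ht, n, hn⟩ | ⟨t, ht, n, hn⟩)
    · exact ⟨t, ht, n, by rw [psg_sup, h.2.1]; exact lt_max_iff.mpr (Or.inl hn)⟩
    · exact ⟨t, ht, n, by rw [psg_sup, h.2.1]; exact lt_max_iff.mpr (Or.inr hn)⟩

lemma psg_add_const (n : ℕ) (a b c : ℝ) (φ : C(X, ℝ)) :
    psg n a b (ContinuousMap.const X c + φ) = psg n (a - c) b φ := by
  ext y
  rw [psg_apply, psg_apply]
  have : (ContinuousMap.const X c + φ) y - a = φ y - (a - c) := by
    simp [ContinuousMap.add_apply]; ring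
  rw [this]

lemma Pp_add_const_iff (h : IsMaxMinMeasure μ) {φ : C(X, ℝ)} {c r : ℝ} :
    Pp μ (ContinuousMap.const X c + φ) r ↔ Pp μ φ (r - c) := by
  constructor
  · rintro ⟨t, ht, n, hn⟩
    rw [psg_add_const] at hn
    refine ⟨t, ht, n, ?_⟩
    have : r + t - c = r - c + t := by ring
    rwa [this] at hn
  · rintro ⟨t, ht, n, hn⟩
    refine ⟨t, ht, n, ?_⟩
    rw [psg_add_const]
    have : r - c + t = r + t - c := by ring
    rwa [this] at hn

lemma Phi_maxplus (h : IsMaxMinMeasure μ) : IsMaxPlusMeasure (Phi μ) := by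
  refine ⟨fun c => ?_, fun φ φ' => ?_, fun c φ => ?_⟩
  · refine eq_of_forall_lt_iff (fun r => ?_)
    rw [lt_Phi_iff h, Pp_const_iff h]
  · refine eq_of_forall_lt_iff (fun r => ?_)
    rw [lt_Phi_iff h, Pp_sup_iff h, lt_max_iff, lt_Phi_iff h, lt_Phi_iff h]
  · refine eq_of_forall_lt_iff (fun r => ?_)
    rw [lt_Phi_iff h, Pp_add_const_iff h, ← lt_Phi_iff h]
    exact sub_lt_iff_lt_add'

/-! ### Psi is a max-min measure -/

lemma Qq_const_iff (hν : IsMaxPlusMeasure ν) {c r : ℝ} :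
    Qq ν (ContinuousMap.const X c) r ↔ r < c := by
  constructor
  · rintro ⟨n, hn⟩
    have hconst : chg n r (ff r) (ContinuousMap.const X c)
        = ContinuousMap.const X (min 0 ((n:ℝ) * max (c - r) 0 + (ff r - 1))) := by
      ext y; rw [chg_apply]; rfl
    rw [hconst, hν.1] at hn
    by_contra hcon
    push_neg at hcon
    rw [max_eq_right (by linarith : c - r ≤ 0), mul_zero, zero_add,
      min_eq_right (by linarith [ff_neg r])] at hn
    linarith
  · intro hrc
    have hd : 0 < c - r := by linarith
    refine ⟨⌈(1 - ff r)/(c - r)⌉₊, ?_⟩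
    have hnd : (⌈(1 - ff r)/(c-r)⌉₊ : ℝ) * (c - r) ≥ 1 - ff r := by
      have h1 : (1 - ff r)/(c-r) ≤ (⌈(1 - ff r)/(c-r)⌉₊ : ℝ) := Nat.le_ceil _
      have := mul_le_mul_of_nonneg_right h1 (le_of_lt hd)
      rwa [div_mul_cancel₀ _ (ne_of_gt hd)] at this
    have hconst : chg ⌈(1 - ff r)/(c-r)⌉₊ r (ff r) (ContinuousMap.const X c) = 0 := by
      ext y
      rw [chg_apply]
      have h2 : max (c - r) 0 = c - r := max_eq_left (le_of_lt hd)
      simp only [ContinuousMap.const_apply, h2, ContinuousMap.zero_apply]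
      rw [min_eq_left (by linarith)]
    rw [hconst, nu_zero hν]
    exact ff_neg r

lemma chg_sup (n : ℕ) (a b : ℝ) (ψ ψ' : C(X, ℝ)) :
    chg n a b (ψ ⊔ ψ') = chg n a b ψ ⊔ chg n a b ψ' := by
  ext y
  rw [ContinuousMap.sup_apply, chg_apply, chg_apply, chg_apply,
    ContinuousMap.sup_apply]
  have key : ∀ u v : ℝ, u ≤ v →
      min (0:ℝ) ((n:ℝ) * max (u - a) 0 + (b-1))
        ≤ min (0:ℝ) ((n:ℝ) * max (v - a) 0 + (b-1)) := by
    intro u v huv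
    have h1 : max (u - a) 0 ≤ max (v - a) 0 := max_le_max (by linarith) le_rfl
    have h2 := mul_le_mul_of_nonneg_left h1 (Nat.cast_nonneg (α := ℝ) n)
    exact min_le_min le_rfl (by linarith)
  rcases le_total (ψ y) (ψ' y) with h1 | h1
  · rw [max_eq_right h1, max_eq_right (key _ _ h1)]
  · rw [max_eq_left h1, max_eq_left (key _ _ h1)]

lemma Qq_sup_iff (hν : IsMaxPlusMeasure ν) {ψ ψ' : C(X, ℝ)} {r : ℝ} :
    Qq ν (ψ ⊔ ψ') r ↔ Qq ν ψ r ∨ Qq ν ψ' r := by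
  constructor
  · rintro ⟨n, hn⟩
    rw [chg_sup, hν.2.1] at hn
    rcases lt_max_iff.mp hn with h1 | h1
    · exact Or.inl ⟨n, h1⟩
    · exact Or.inr ⟨n, h1⟩
  · rintro (⟨n, hn⟩ | ⟨n, hn⟩)
    · exact ⟨n, by rw [chg_sup, hν.2.1]; exact lt_max_iff.mpr (Or.inl hn)⟩
    · exact ⟨n, by rw [chg_sup, hν.2.1]; exact lt_max_iff.mpr (Or.inr hn)⟩

lemma chg_mono_n {n n' : ℕ} (hnn : n ≤ n') (a b : ℝ) (ψ : C(X, ℝ)) :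
    chg n a b ψ ≤ chg n' a b ψ := by
  rw [ContinuousMap.le_def]
  intro y
  rw [chg_apply, chg_apply]
  have h1 : (n:ℝ) * max (ψ y - a) 0 ≤ (n':ℝ) * max (ψ y - a) 0 :=
    mul_le_mul_of_nonneg_right (by exact_mod_cast hnn) (le_max_right _ _)
  exact min_le_min le_rfl (by linarith)

lemma Qq_inf_iff (hν : IsMaxPlusMeasure ν) {ψ : C(X, ℝ)} {c r : ℝ} :
    Qq ν (ContinuousMap.const X c ⊓ ψ) r ↔ (r < c ∧ Qq ν ψ r) := by
  rcases le_or_gt c r with hcr | hcr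
  · -- r ≥ c : both sides false
    constructor
    · rintro ⟨n, hn⟩
      have hconst : chg n r (ff r) (ContinuousMap.const X c ⊓ ψ)
          = ContinuousMap.const X (ff r - 1) := by
        ext y
        rw [chg_apply]
        simp only [ContinuousMap.inf_apply, ContinuousMap.const_apply]
        have h1 : min c (ψ y) - r ≤ 0 := by
          have := min_le_left c (ψ y); linarith
        rw [max_eq_right h1, mul_zero, zero_add]
        exact min_eq_right (by linarith [ff_neg r])
      rw [hconst, hν.1] at hn
      linarith
    · rintro ⟨h1, -⟩; linarith
  · -- r < c
    have hd : 0 < c - r := by linarith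
    set N := ⌈(1 - ff r)/(c - r)⌉₊ with hN
    have hNd : (N : ℝ) * (c - r) ≥ 1 - ff r := by
      have h1 : (1 - ff r)/(c-r) ≤ (N : ℝ) := Nat.le_ceil _
      have := mul_le_mul_of_nonneg_right h1 (le_of_lt hd)
      rwa [div_mul_cancel₀ _ (ne_of_gt hd)] at this
    have key : ∀ n : ℕ, N ≤ n →
        chg n r (ff r) (ContinuousMap.const X c ⊓ ψ) = chg n r (ff r) ψ := by
      intro n hn
      have hnd : (n : ℝ) * (c - r) ≥ 1 - ff r := by
        have : (N:ℝ) ≤ n := by exact_mod_cast hn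
        nlinarith
      ext y
      rw [chg_apply, chg_apply]
      simp only [ContinuousMap.inf_apply, ContinuousMap.const_apply]
      rcases le_total (ψ y) c with h1 | h1
      · rw [min_eq_right h1]
      · rw [min_eq_left h1]
        have h2 : max (c - r) 0 = c - r := max_eq_left (le_of_lt hd)
        have h3 : max (ψ y - r) 0 = ψ y - r := max_eq_left (by linarith)
        rw [h2, h3]
        have h4 : (0:ℝ) ≤ (n:ℝ) * (c - r) + (ff r - 1) := by linarith
        have h5 : (n:ℝ) * (c - r) ≤ (n:ℝ) * (ψ y - r) :=
          mul_le_mul_of_nonneg_left (by linarith) (Nat.cast_nonneg _)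
        rw [min_eq_left h4, min_eq_left (by linarith)]
    constructor
    · rintro ⟨n, hn⟩
      refine ⟨hcr, max n N, ?_⟩
      have h1 : ν (chg n r (ff r) (ContinuousMap.const X c ⊓ ψ))
          ≤ ν (chg (max n N) r (ff r) (ContinuousMap.const X c ⊓ ψ)) :=
        mono_of_sup hν.2.1 (chg_mono_n (le_max_left _ _) _ _ _)
      rw [key (max n N) (le_max_right _ _)] at h1
      linarith
    · rintro ⟨-, n, hn⟩
      refine ⟨max n N, ?_⟩
      have h1 : ν (chg n r (ff r) ψ) ≤ ν (chg (max n N) r (ff r) ψ) :=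
        mono_of_sup hν.2.1 (chg_mono_n (le_max_left _ _) _ _ _)
      rw [key (max n N) (le_max_right _ _)]
      linarith

lemma Psi_maxmin (hν : IsMaxPlusMeasure ν) : IsMaxMinMeasure (Psi ν) := by
  refine ⟨fun c => ?_, fun ψ ψ' => ?_, fun c ψ => ?_⟩
  · refine eq_of_forall_lt_iff (fun r => ?_)
    rw [lt_Psi_iff hν, Qq_const_iff hν]
  · refine eq_of_forall_lt_iff (fun r => ?_)
    rw [lt_Psi_iff hν, Qq_sup_iff hν, lt_max_iff, lt_Psi_iff hν, lt_Psi_iff hν]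
  · refine eq_of_forall_lt_iff (fun r => ?_)
    rw [lt_Psi_iff hν, Qq_inf_iff hν, lt_min_iff, lt_Psi_iff hν]


/-! ### the composites are the identity -/

lemma key1 (h : IsMaxMinMeasure μ) {ψ : C(X, ℝ)} {r : ℝ} :
    (∃ n, Pp μ (chg n r (ff r) ψ) (ff r)) ↔ r < μ ψ := by
  constructor
  · -- hard direction: uses the covering lemma on the gadget
    rintro ⟨n, t, ht, m, hG⟩
    set b := gg t with hb
    set χ := chg n r (ff r) ψ with hχ
    obtain ⟨x₀, H⟩ := cover_min h (by norm_num : (0:ℝ) < 1/2) hG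
    -- G x₀ is large
    have hGx₀ : b - 1/2 < psg m (ff r + t) b χ x₀ := by
      have h1 := H 0
      have h2 := mu_rho_le h (c := psg m (ff r + t) b χ x₀ + 1/2) (x := x₀) (k := 0)
      linarith
    -- hence χ x₀ > ff r + t
    have hχx₀ : ff r + t < χ x₀ := by
      rw [psg_apply] at hGx₀
      have h1 : b - 1/2 < (m:ℝ) * max (χ x₀ - (ff r + t)) 0 + (b - 1) :=
        lt_of_lt_of_le hGx₀ (min_le_right _ _)
      have h2 : 0 < max (χ x₀ - (ff r + t)) 0 := by
        by_contra h3
        push_neg at h3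
        have h4 : max (χ x₀ - (ff r + t)) 0 = 0 :=
          le_antisymm h3 (le_max_right _ _)
        rw [h4, mul_zero, zero_add] at h1
        linarith
      have h5 : 0 < χ x₀ - (ff r + t) := by
        by_contra h6
        push_neg at h6
        rw [max_eq_right h6] at h2
        linarith
      linarith
    -- χ x₀ ≤ 0, hence t < - ff r and b > r
    have hχle : χ x₀ ≤ 0 := by
      rw [hχ, chg_apply]; exact min_le_left _ _
    have htff : t < -(ff r) := by linarith
    have hbr : r < b := by
      rw [hb, ← gg_neg_ff r]
      exact gg_anti ht htff
    -- and ψ x₀ > r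
    have hψx₀ : r < ψ x₀ := by
      rw [hχ, chg_apply] at hχx₀
      have h2 : 0 < max (ψ x₀ - r) 0 := by
        by_contra h3
        push_neg at h3
        have h4 : max (ψ x₀ - r) 0 = 0 := le_antisymm h3 (le_max_right _ _)
        rw [h4, mul_zero, zero_add] at hχx₀
        have := min_le_right (0:ℝ) (ff r - 1)
        have h5 : ff r + t ≤ ff r - 1 ∨ ff r + t < 0 := by
          rcases le_total (0:ℝ) (ff r - 1) with h6 | h6
          · right; linarith [ff_neg r]
          · left; have := min_eq_right h6 ▸ hχx₀; linarith
        rcases h5 with h6 | h6 <;> linarith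
      by_contra h7
      push_neg at h7
      rw [max_eq_right (by linarith)] at h2
      linarith
    -- transfer down to level c'
    set c' := min ((r + ψ x₀)/2) ((r + b)/2) with hc'
    have hc'r : r < c' := lt_min (by linarith) (by linarith)
    have hc'ψ : c' < ψ x₀ := lt_of_le_of_lt (min_le_left _ _) (by linarith)
    have hc'b : c' ≤ b := le_trans (min_le_right _ _) (by linarith)
    obtain ⟨k₀, hk₀⟩ := exists_rho_le hc'ψ
    have htr : min c' b ≤ μ (rho c' x₀ k₀) :=
      transfer h (fun k => le_of_lt (H k)) c' k₀
    have h8 : μ (rho c' x₀ k₀) ≤ μ ψ := mono_of_sup h.2.1 hk₀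
    rw [min_eq_left hc'b] at htr
    linarith
  · -- easy direction: construct the witnesses
    intro hrψ
    set ε := (μ ψ - r)/4 with hε
    have hεpos : 0 < ε := by rw [hε]; linarith
    obtain ⟨x₀, H⟩ := cover_min h hεpos (show r + 3*ε < μ ψ by rw [hε]; linarith)
    have hψx₀ : r + 2*ε < ψ x₀ := by
      have h1 := H 0
      have h2 := mu_rho_le h (c := ψ x₀ + ε) (x := x₀) (k := 0)
      linarith
    set b := r + ε with hb
    set t := -(ff b) with htdef
    have htpos : 0 < t := neg_ff_pos b
    have hggt : gg t = b := gg_neg_ff b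
    set n := ⌈(1 - ff r)/ε⌉₊ with hn
    have hnε : (n:ℝ) * ε ≥ 1 - ff r := by
      have h1 : (1 - ff r)/ε ≤ (n : ℝ) := Nat.le_ceil _
      have := mul_le_mul_of_nonneg_right h1 (le_of_lt hεpos)
      rwa [div_mul_cancel₀ _ (ne_of_gt hεpos)] at this
    set χ := chg n r (ff r) ψ with hχ
    obtain ⟨τ, hτ, hball⟩ := exists_ball_lt (show r + ε < ψ x₀ by linarith)
    have hχball : ∀ y, dist x₀ y < τ → χ y = 0 := by
      intro y hy
      have h1 : r + ε < ψ y := hball y hy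
      rw [hχ, chg_apply]
      rw [max_eq_left (by linarith)]
      refine min_eq_left ?_
      have h2 : (n:ℝ) * ε ≤ (n:ℝ) * (ψ y - r) :=
        mul_le_mul_of_nonneg_left (by linarith) (Nat.cast_nonneg _)
      linarith
    set δ₁ := ff b - ff r with hδ₁
    have hδ₁pos : 0 < δ₁ := by
      rw [hδ₁]; have := ff_mono (show r < b by rw [hb]; linarith); linarith
    set m := ⌈2/δ₁⌉₊ with hm
    have hmδ : (m:ℝ) * δ₁ ≥ 2 := by
      have h1 : 2/δ₁ ≤ (m : ℝ) := Nat.le_ceil _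
      have := mul_le_mul_of_nonneg_right h1 (le_of_lt hδ₁pos)
      rwa [div_mul_cancel₀ _ (ne_of_gt hδ₁pos)] at this
    refine ⟨n, t, htpos, m, ?_⟩
    -- the gadget dominates a competitor at level gg t + 1
    have hGball : ∀ y, dist x₀ y < τ → psg m (ff r + t) (gg t) χ y = gg t + 1 := by
      intro y hy
      rw [psg_apply, hχball y hy]
      have h1 : (0:ℝ) - (ff r + t) = δ₁ := by rw [hδ₁, htdef]; ring
      rw [h1, max_eq_left (le_of_lt hδ₁pos)]
      exact min_eq_left (by linarith)
    have hGlow : ∀ y, gg t - 1 ≤ psg m (ff r + t) (gg t) χ y := by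
      intro y
      rw [psg_apply]
      refine le_min (by linarith) ?_
      have h1 : (0:ℝ) ≤ (m:ℝ) * max (χ y - (ff r + t)) 0 :=
        mul_nonneg (Nat.cast_nonneg _) (le_max_right _ _)
      linarith
    set ks := ⌈3/τ⌉₊ with hks
    have hksτ : (ks:ℝ) * τ ≥ 3 := by
      have h1 : 3/τ ≤ (ks : ℝ) := Nat.le_ceil _
      have := mul_le_mul_of_nonneg_right h1 (le_of_lt hτ)
      rwa [div_mul_cancel₀ _ (ne_of_gt hτ)] at this
    have hdom : rho (gg t + 1) x₀ ks ≤ psg m (ff r + t) (gg t) χ := by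
      rw [ContinuousMap.le_def]
      intro y
      rw [rho_apply]
      rcases lt_or_ge (dist x₀ y) τ with hd | hd
      · rw [hGball y hd]
        exact min_le_left _ _
      · refine le_trans (min_le_right _ _) (le_trans ?_ (hGlow y))
        have h2 : (ks:ℝ) * τ ≤ (ks:ℝ) * dist x₀ y :=
          mul_le_mul_of_nonneg_left hd (Nat.cast_nonneg _)
        linarith
    have htr : min (gg t + 1) (r + 3*ε) ≤ μ (rho (gg t + 1) x₀ ks) :=
      transfer h (fun k => le_of_lt (H k)) _ ks
    have h9 : μ (rho (gg t + 1) x₀ ks) ≤ μ (psg m (ff r + t) (gg t) χ) :=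
      mono_of_sup h.2.1 hdom
    have h10 : gg t < min (gg t + 1) (r + 3*ε) := by
      rw [hggt, lt_min_iff]
      constructor <;> [linarith; linarith]
    linarith

lemma PsiPhi_eq (h : IsMaxMinMeasure μ) : Psi (Phi μ) = μ := by
  funext ψ
  refine eq_of_forall_lt_iff (fun r => ?_)
  rw [lt_Psi_iff (Phi_maxplus h)]
  constructor
  · rintro ⟨n, hn⟩
    rw [lt_Phi_iff h] at hn
    exact (key1 h).mp ⟨n, hn⟩
  · intro hr
    obtain ⟨n, hn⟩ := (key1 h).mpr hr
    exact ⟨n, (lt_Phi_iff h).mpr hn⟩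

lemma key2 (hν : IsMaxPlusMeasure ν) {φ : C(X, ℝ)} {r : ℝ} :
    (∃ t : ℝ, 0 < t ∧ ∃ m, Qq ν (psg m (r+t) (gg t) φ) (gg t)) ↔ r < ν φ := by
  constructor
  · -- hard direction
    rintro ⟨t, ht, m, n, hW⟩
    rw [ff_gg ht] at hW
    set W := chg n (gg t) (-t) (psg m (r+t) (gg t) φ) with hWdef
    set σ := ν W + t with hσ
    have hσpos : 0 < σ := by rw [hσ]; linarith
    obtain ⟨x₀, H⟩ := cover_plus hν (show (0:ℝ) < σ/4 by linarith)
      (show ν W - σ/4 < ν W by linarith)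
    have hWle : W x₀ ≤ 0 := by rw [hWdef, chg_apply]; exact min_le_left _ _
    have hθle : ∀ k, ν (th x₀ k) ≤ 0 := fun k => nu_th_le hν
    have hWx₀ : -t + σ/2 < W x₀ := by
      have h1 := H 0
      have h2 := hθle 0
      rw [hσ] at *
      linarith
    have hθk : ∀ k, -t + σ/2 - W x₀ < ν (th x₀ k) := by
      intro k
      have h1 := H k
      rw [hσ] at *
      linarith
    have hθk' : ∀ k, -t + σ/2 ≤ ν (th x₀ k) := by
      intro k
      have := hθk k
      linarith [hWle]
    -- φ x₀ > r + t
    have hφx₀ : r + t < φ x₀ := by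
      rw [hWdef, chg_apply] at hWx₀
      have h2 : 0 < max (psg m (r+t) (gg t) φ x₀ - gg t) 0 := by
        by_contra h3
        push_neg at h3
        have h4 : max (psg m (r+t) (gg t) φ x₀ - gg t) 0 = 0 :=
          le_antisymm h3 (le_max_right _ _)
        rw [h4, mul_zero, zero_add] at hWx₀
        have h5 : min (0:ℝ) (-t - 1) = -t - 1 := min_eq_right (by linarith)
        rw [h5] at hWx₀
        linarith
      have h5 : gg t < psg m (r+t) (gg t) φ x₀ := by
        by_contra h6
        push_neg at h6
        rw [max_eq_right (by linarith)] at h2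
        linarith
      rw [psg_apply] at h5
      have h7 : gg t < (m:ℝ) * max (φ x₀ - (r+t)) 0 + (gg t - 1) :=
        lt_of_lt_of_le h5 (min_le_right _ _)
      have h8 : 0 < max (φ x₀ - (r+t)) 0 := by
        by_contra h9
        push_neg at h9
        have h10 : max (φ x₀ - (r+t)) 0 = 0 := le_antisymm h9 (le_max_right _ _)
        rw [h10, mul_zero, zero_add] at h7
        linarith
      by_contra h11
      push_neg at h11
      rw [max_eq_right (by linarith)] at h8
      linarith
    -- conclude
    obtain ⟨K, hK⟩ := exists_th_le (φ := φ) (x := x₀) (show (0:ℝ) < σ/4 by linarith)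
    have h12 : φ x₀ - σ/4 + ν (th x₀ K) ≤ ν φ := by
      have h13 := mono_of_sup hν.2.1 (hK K le_rfl)
      rwa [hν.2.2] at h13
    have h14 := hθk' K
    linarith
  · -- easy direction
    intro hrφ
    set ε := (ν φ - r)/4 with hε
    have hεpos : 0 < ε := by rw [hε]; linarith
    obtain ⟨x₀, H⟩ := cover_plus hν hεpos (show r + 3*ε < ν φ by rw [hε]; linarith)
    have hφx₀ : r + 2*ε < φ x₀ := by
      have h1 := H 0
      have h2 := nu_th_le hν (x := x₀) (k := 0)
      linarith
    set t := φ x₀ - r - 2*ε with htdef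
    have htpos : 0 < t := by rw [htdef]; linarith
    have hθ : ∀ k, -t < ν (th x₀ k) := by
      intro k
      have h1 := H k
      rw [htdef]
      linarith
    obtain ⟨τ, hτ, hball⟩ := exists_ball_lt
      (show (r + t) + ε < φ x₀ by rw [htdef]; linarith)
    set m := ⌈2/ε⌉₊ with hm
    have hmε : (m:ℝ) * ε ≥ 2 := by
      have h1 : 2/ε ≤ (m : ℝ) := Nat.le_ceil _
      have := mul_le_mul_of_nonneg_right h1 (le_of_lt hεpos)
      rwa [div_mul_cancel₀ _ (ne_of_gt hεpos)] at this
    have hgball : ∀ y, dist x₀ y < τ → psg m (r+t) (gg t) φ y = gg t + 1 := by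
      intro y hy
      have h1 := hball y hy
      rw [psg_apply, max_eq_left (by linarith)]
      refine min_eq_left ?_
      have h2 : (m:ℝ) * ε ≤ (m:ℝ) * (φ y - (r+t)) :=
        mul_le_mul_of_nonneg_left (by linarith) (Nat.cast_nonneg _)
      linarith
    set n := ⌈t+1⌉₊ with hn
    have hnt : (n:ℝ) ≥ t + 1 := Nat.le_ceil _
    refine ⟨t, htpos, m, n, ?_⟩
    rw [ff_gg htpos]
    set W := chg n (gg t) (-t) (psg m (r+t) (gg t) φ) with hWdef
    have hWball : ∀ y, dist x₀ y < τ → W y = 0 := by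
      intro y hy
      rw [hWdef, chg_apply, hgball y hy]
      have h1 : gg t + 1 - gg t = 1 := by ring
      rw [h1, max_eq_left (by norm_num), mul_one]
      exact min_eq_left (by linarith)
    have hWlow : ∀ y, -t - 1 ≤ W y := by
      intro y
      rw [hWdef, chg_apply]
      refine le_min (by linarith) ?_
      have h1 : (0:ℝ) ≤ (n:ℝ) * max (psg m (r+t) (gg t) φ y - gg t) 0 :=
        mul_nonneg (Nat.cast_nonneg _) (le_max_right _ _)
      linarith
    set ks := max ⌈2/τ⌉₊ ⌈t+1⌉₊ with hks
    have hks1 : (⌈2/τ⌉₊:ℝ) ≤ ks := by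
      exact_mod_cast Nat.cast_le.mpr (le_max_left _ _)
    have hks2 : (⌈t+1⌉₊:ℝ) ≤ ks := by
      exact_mod_cast Nat.cast_le.mpr (le_max_right _ _)
    have hksτ : (ks:ℝ) * τ ≥ 2 := by
      have h1 : 2/τ ≤ (⌈2/τ⌉₊ : ℝ) := Nat.le_ceil _
      have h2 : 2/τ ≤ (ks:ℝ) := le_trans h1 hks1
      have := mul_le_mul_of_nonneg_right h2 (le_of_lt hτ)
      rwa [div_mul_cancel₀ _ (ne_of_gt hτ)] at this
    have hkst : (ks:ℝ) ≥ t + 1 := le_trans (Nat.le_ceil _) hks2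
    have hdom : th x₀ ks ≤ W := by
      rw [ContinuousMap.le_def]
      intro y
      rcases lt_or_ge (dist x₀ y) τ with hd | hd
      · rw [hWball y hd, th_apply]
        simpa using min_le_left _ _
      · refine le_trans ?_ (hWlow y)
        rw [th_apply]
        refine le_trans (min_le_right _ _) ?_
        have h2 : (ks:ℝ) * ks * τ ≤ (ks:ℝ) * ks * dist x₀ y := by
          apply mul_le_mul_of_nonneg_left hd (by positivity)
        have h3 : (ks:ℝ) * ((ks:ℝ) * τ) ≥ (ks:ℝ) * 2 := by
          apply mul_le_mul_of_nonneg_left hksτ (Nat.cast_nonneg _)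
        nlinarith [Nat.cast_nonneg (α := ℝ) ks]
    have h4 : ν (th x₀ ks) ≤ ν W := mono_of_sup hν.2.1 hdom
    have := hθ ks
    linarith

lemma PhiPsi_eq (hν : IsMaxPlusMeasure ν) : Phi (Psi ν) = ν := by
  funext φ
  refine eq_of_forall_lt_iff (fun r => ?_)
  rw [lt_Phi_iff (Psi_maxmin hν)]
  constructor
  · rintro ⟨t, ht, n, hn⟩
    rw [lt_Psi_iff hν] at hn
    exact (key2 hν).mp ⟨t, ht, n, hn⟩
  · intro hr
    obtain ⟨t, ht, n, hn⟩ := (key2 hν).mpr hr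
    exact ⟨t, ht, n, (lt_Psi_iff hν).mpr hn⟩


/-! ### monotonicity of Phi -/

lemma Phi_mono {μ μ' : C(X, ℝ) → ℝ} (h : IsMaxMinMeasure μ)
    (h' : IsMaxMinMeasure μ') (hle : ∀ ξ, μ ξ ≤ μ' ξ) (φ : C(X, ℝ)) :
    Phi μ φ ≤ Phi μ' φ := by
  refine csSup_le_csSup (Phi_S_bdd h' φ) (Phi_S_nonempty h φ) ?_
  rintro r ⟨t, ht, n, hn⟩
  exact ⟨t, ht, n, lt_of_lt_of_le hn (hle _)⟩

/-! ### topology -/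

lemma isClosed_maxmin :
    IsClosed {μ : C(X, ℝ) → ℝ | IsMaxMinMeasure μ} := by
  have : {μ : C(X, ℝ) → ℝ | IsMaxMinMeasure μ}
      = (⋂ c : ℝ, {μ | μ (ContinuousMap.const X c) = c}) ∩
        ((⋂ φ : C(X, ℝ), ⋂ ψ : C(X, ℝ), {μ | μ (φ ⊔ ψ) = max (μ φ) (μ ψ)}) ∩
         (⋂ c : ℝ, ⋂ φ : C(X, ℝ), {μ | μ (ContinuousMap.const X c ⊓ φ) = min c (μ φ)})) := by
    ext μ
    simp only [Set.mem_setOf_eq, Set.mem_inter_iff, Set.mem_iInter, IsMaxMinMeasure]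
    all_goals tauto
  rw [this]
  refine IsClosed.inter ?_ (IsClosed.inter ?_ ?_)
  · exact isClosed_iInter fun c => isClosed_eq (continuous_apply _) continuous_const
  · exact isClosed_iInter fun φ => isClosed_iInter fun ψ =>
      isClosed_eq (continuous_apply _) ((continuous_apply φ).max (continuous_apply ψ))
  · exact isClosed_iInter fun c => isClosed_iInter fun φ =>
      isClosed_eq (continuous_apply _) (continuous_const.min (continuous_apply φ))

lemma isClosed_maxplus :
    IsClosed {μ : C(X, ℝ) → ℝ | IsMaxPlusMeasure μ} := by
  have : {μ : C(X, ℝ) → ℝ | IsMaxPlusMeasure μ}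
      = (⋂ c : ℝ, {μ | μ (ContinuousMap.const X c) = c}) ∩
        ((⋂ φ : C(X, ℝ), ⋂ ψ : C(X, ℝ), {μ | μ (φ ⊔ ψ) = max (μ φ) (μ ψ)}) ∩
         (⋂ c : ℝ, ⋂ φ : C(X, ℝ), {μ | μ (ContinuousMap.const X c + φ) = c + μ φ})) := by
    ext μ
    simp only [Set.mem_setOf_eq, Set.mem_inter_iff, Set.mem_iInter, IsMaxPlusMeasure]
    all_goals tauto
  rw [this]
  refine IsClosed.inter ?_ (IsClosed.inter ?_ ?_)
  · exact isClosed_iInter fun c => isClosed_eq (continuous_apply _) continuous_const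
  · exact isClosed_iInter fun φ => isClosed_iInter fun ψ =>
      isClosed_eq (continuous_apply _) ((continuous_apply φ).max (continuous_apply ψ))
  · exact isClosed_iInter fun c => isClosed_iInter fun φ =>
      isClosed_eq (continuous_apply _) (continuous_const.add (continuous_apply φ))

lemma bounds_of_mono {μ : C(X, ℝ) → ℝ}
    (hc : ∀ c : ℝ, μ (ContinuousMap.const X c) = c)
    (hs : ∀ φ ψ : C(X, ℝ), μ (φ ⊔ ψ) = max (μ φ) (μ ψ)) (φ : C(X, ℝ)) :
    μ φ ∈ Set.Icc (lo φ) (hi φ) := by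
  constructor
  · have h1 : ContinuousMap.const X (lo φ) ≤ φ := by
      rw [ContinuousMap.le_def]; exact fun x => lo_le φ x
    have := mono_of_sup hs h1
    rwa [hc] at this
  · have h1 : φ ≤ ContinuousMap.const X (hi φ) := by
      rw [ContinuousMap.le_def]; exact fun x => le_hi φ x
    have := mono_of_sup hs h1
    rwa [hc] at this

lemma isCompact_maxmin :
    IsCompact {μ : C(X, ℝ) → ℝ | IsMaxMinMeasure μ} := by
  have hK : IsCompact (Set.pi Set.univ (fun φ : C(X, ℝ) => Set.Icc (lo φ) (hi φ))) :=
    isCompact_univ_pi (fun φ => isCompact_Icc)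
  refine IsCompact.of_isClosed_subset hK isClosed_maxmin ?_
  intro μ hμ
  rw [Set.mem_univ_pi]
  exact fun φ => bounds_of_mono hμ.1 hμ.2.1 φ

lemma isCompact_maxplus :
    IsCompact {μ : C(X, ℝ) → ℝ | IsMaxPlusMeasure μ} := by
  have hK : IsCompact (Set.pi Set.univ (fun φ : C(X, ℝ) => Set.Icc (lo φ) (hi φ))) :=
    isCompact_univ_pi (fun φ => isCompact_Icc)
  refine IsCompact.of_isClosed_subset hK isClosed_maxplus ?_
  intro μ hμ
  rw [Set.mem_univ_pi]
  exact fun φ => bounds_of_mono hμ.1 hμ.2.1 φ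

noncomputable def mainEquiv :
    {μ : C(X, ℝ) → ℝ // IsMaxMinMeasure μ} ≃ {μ : C(X, ℝ) → ℝ // IsMaxPlusMeasure μ} where
  toFun j := ⟨Phi j.1, Phi_maxplus j.2⟩
  invFun i := ⟨Psi i.1, Psi_maxmin i.2⟩
  left_inv j := Subtype.ext (PsiPhi_eq j.2)
  right_inv i := Subtype.ext (PhiPsi_eq i.2)

/-- The graph of the transform is closed. -/
lemma isClosed_graph :
    IsClosed {p : {μ : C(X, ℝ) → ℝ // IsMaxMinMeasure μ} ×
        {μ : C(X, ℝ) → ℝ // IsMaxPlusMeasure μ} | p.2.1 = Phi p.1.1} := by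
  have hA : IsClosed {p : {μ : C(X, ℝ) → ℝ // IsMaxMinMeasure μ} ×
      {μ : C(X, ℝ) → ℝ // IsMaxPlusMeasure μ} |
      ∀ (φ : C(X, ℝ)) (r t : ℝ) (n : ℕ),
        0 < t → gg t < p.1.1 (psg n (r+t) (gg t) φ) → r ≤ p.2.1 φ} := by
    have he : {p : {μ : C(X, ℝ) → ℝ // IsMaxMinMeasure μ} ×
        {μ : C(X, ℝ) → ℝ // IsMaxPlusMeasure μ} |
        ∀ (φ : C(X, ℝ)) (r t : ℝ) (n : ℕ),
          0 < t → gg t < p.1.1 (psg n (r+t) (gg t) φ) → r ≤ p.2.1 φ}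
        = ⋂ (φ : C(X, ℝ)), ⋂ (r : ℝ), ⋂ (t : ℝ), ⋂ (n : ℕ),
            {p | 0 < t → gg t < p.1.1 (psg n (r+t) (gg t) φ) → r ≤ p.2.1 φ} := by
      ext p
      simp only [Set.mem_setOf_eq, Set.mem_iInter]
    rw [he]
    refine isClosed_iInter fun φ => isClosed_iInter fun r =>
      isClosed_iInter fun t => isClosed_iInter fun n => ?_
    by_cases ht : 0 < t
    · have he2 : {p : {μ : C(X, ℝ) → ℝ // IsMaxMinMeasure μ} ×
          {μ : C(X, ℝ) → ℝ // IsMaxPlusMeasure μ} |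
          0 < t → gg t < p.1.1 (psg n (r+t) (gg t) φ) → r ≤ p.2.1 φ}
          = {p | p.1.1 (psg n (r+t) (gg t) φ) ≤ gg t} ∪ {p | r ≤ p.2.1 φ} := by
        ext p
        simp only [Set.mem_setOf_eq, Set.mem_union]
        constructor
        · intro hp
          rcases le_or_gt (p.1.1 (psg n (r+t) (gg t) φ)) (gg t) with h1 | h1
          · exact Or.inl h1
          · exact Or.inr (hp ht h1)
        · rintro (h1 | h1) _ h2
          · linarith
          · exact h1
      rw [he2]
      refine IsClosed.union ?_ ?_
      · exact isClosed_le ((continuous_apply _).comp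
          (continuous_subtype_val.comp continuous_fst)) continuous_const
      · exact isClosed_le continuous_const ((continuous_apply _).comp
          (continuous_subtype_val.comp continuous_snd))
    · have he3 : {p : {μ : C(X, ℝ) → ℝ // IsMaxMinMeasure μ} ×
          {μ : C(X, ℝ) → ℝ // IsMaxPlusMeasure μ} |
          0 < t → gg t < p.1.1 (psg n (r+t) (gg t) φ) → r ≤ p.2.1 φ} = Set.univ := by
        ext p
        simp only [Set.mem_setOf_eq, Set.mem_univ, iff_true]
        intro h1; exact absurd h1 ht
      rw [he3]; exact isClosed_univ
  have hB : IsClosed {p : {μ : C(X, ℝ) → ℝ // IsMaxMinMeasure μ} ×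
      {μ : C(X, ℝ) → ℝ // IsMaxPlusMeasure μ} |
      ∀ (ψ : C(X, ℝ)) (r : ℝ) (n : ℕ),
        ff r < p.2.1 (chg n r (ff r) ψ) → r ≤ p.1.1 ψ} := by
    have he : {p : {μ : C(X, ℝ) → ℝ // IsMaxMinMeasure μ} ×
        {μ : C(X, ℝ) → ℝ // IsMaxPlusMeasure μ} |
        ∀ (ψ : C(X, ℝ)) (r : ℝ) (n : ℕ),
          ff r < p.2.1 (chg n r (ff r) ψ) → r ≤ p.1.1 ψ}
        = ⋂ (ψ : C(X, ℝ)), ⋂ (r : ℝ), ⋂ (n : ℕ),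
            ({p | p.2.1 (chg n r (ff r) ψ) ≤ ff r} ∪ {p | r ≤ p.1.1 ψ}) := by
      ext p
      simp only [Set.mem_setOf_eq, Set.mem_iInter, Set.mem_union]
      constructor
      · intro hp ψ r n
        rcases le_or_gt (p.2.1 (chg n r (ff r) ψ)) (ff r) with h1 | h1
        · exact Or.inl h1
        · exact Or.inr (hp ψ r n h1)
      · intro hp ψ r n h1
        rcases hp ψ r n with h2 | h2
        · linarith
        · exact h2
    rw [he]
    refine isClosed_iInter fun ψ => isClosed_iInter fun r => isClosed_iInter fun n =>
      IsClosed.union ?_ ?_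
    · exact isClosed_le ((continuous_apply _).comp
        (continuous_subtype_val.comp continuous_snd)) continuous_const
    · exact isClosed_le continuous_const ((continuous_apply _).comp
        (continuous_subtype_val.comp continuous_fst))
  suffices heq : {p : {μ : C(X, ℝ) → ℝ // IsMaxMinMeasure μ} ×
      {μ : C(X, ℝ) → ℝ // IsMaxPlusMeasure μ} | p.2.1 = Phi p.1.1}
      = {p : {μ : C(X, ℝ) → ℝ // IsMaxMinMeasure μ} ×
          {μ : C(X, ℝ) → ℝ // IsMaxPlusMeasure μ} |
          ∀ (φ : C(X, ℝ)) (r t : ℝ) (n : ℕ),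
            0 < t → gg t < p.1.1 (psg n (r+t) (gg t) φ) → r ≤ p.2.1 φ}
        ∩ {p | ∀ (ψ : C(X, ℝ)) (r : ℝ) (n : ℕ),
            ff r < p.2.1 (chg n r (ff r) ψ) → r ≤ p.1.1 ψ} by
    rw [heq]; exact hA.inter hB
  refine Set.Subset.antisymm ?_ ?_
  · rintro ⟨⟨μ, hμ⟩, ⟨ν, hν⟩⟩ hp
    simp only [Set.mem_setOf_eq] at hp
    refine ⟨?_, ?_⟩
    · intro φ r t n ht h1
      have hP : Pp μ φ r := ⟨t, ht, n, h1⟩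
      have h2 := (lt_Phi_iff hμ).mpr hP
      rw [← hp] at h2
      exact le_of_lt h2
    · intro ψ r n h1
      have hQ : Qq ν ψ r := ⟨n, h1⟩
      rw [hp] at hQ
      have h2 := (lt_Psi_iff (Phi_maxplus hμ)).mpr hQ
      rw [PsiPhi_eq hμ] at h2
      exact le_of_lt h2
  · rintro ⟨⟨μ, hμ⟩, ⟨ν, hν⟩⟩ ⟨hpA, hpB⟩
    simp only [Set.mem_setOf_eq] at hpA hpB ⊢
    have h1 : ∀ φ, Phi μ φ ≤ ν φ := by
      intro φ
      refine csSup_le (Phi_S_nonempty hμ φ) ?_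
      rintro r ⟨t, ht, n, hn⟩
      exact hpA φ r t n ht hn
    have h2 : ∀ ψ, Psi ν ψ ≤ μ ψ := by
      intro ψ
      refine csSup_le (Psi_S_nonempty hν ψ) ?_
      rintro r ⟨n, hn⟩
      exact hpB ψ r n hn
    funext φ
    refine le_antisymm ?_ (h1 φ)
    calc ν φ = Phi (Psi ν) φ := by rw [PhiPsi_eq hν]
      _ ≤ Phi μ φ := Phi_mono (Psi_maxmin hν) hμ h2 φ

lemma continuous_mainEquiv :
    Continuous (mainEquiv (X := X)) := by
  rw [continuous_iff_isClosed]
  intro C hC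
  haveI hIc : CompactSpace {μ : C(X, ℝ) → ℝ // IsMaxPlusMeasure μ} :=
    isCompact_iff_compactSpace.mp isCompact_maxplus
  have himg : (mainEquiv (X := X)) ⁻¹' C = Prod.fst ''
      ({p : {μ : C(X, ℝ) → ℝ // IsMaxMinMeasure μ} ×
        {μ : C(X, ℝ) → ℝ // IsMaxPlusMeasure μ} | p.2.1 = Phi p.1.1}
        ∩ Prod.snd ⁻¹' C) := by
    ext j
    simp only [Set.mem_preimage, Set.mem_image, Set.mem_inter_iff, Set.mem_setOf_eq]
    constructor
    · intro hj
      exact ⟨(j, mainEquiv j), ⟨rfl, hj⟩, rfl⟩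
    · rintro ⟨⟨j', i⟩, ⟨hgr, hi⟩, rfl⟩
      have h3 : i = mainEquiv j' := Subtype.ext hgr
      rwa [h3] at hi
  rw [himg]
  exact isClosedMap_fst_of_compactSpace _
    (isClosed_graph.inter (hC.preimage continuous_snd))

/-- The homeomorphism, in the nonempty metric case. -/
noncomputable def mainHomeo :
    {μ : C(X, ℝ) → ℝ // IsMaxMinMeasure μ} ≃ₜ
      {μ : C(X, ℝ) → ℝ // IsMaxPlusMeasure μ} := by
  haveI hJc : CompactSpace {μ : C(X, ℝ) → ℝ // IsMaxMinMeasure μ} :=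
    isCompact_iff_compactSpace.mp isCompact_maxmin
  exact Continuous.homeoOfEquivCompactToT2 (f := mainEquiv) continuous_mainEquiv

end MMIP0

/-- for every compact metrizable space `X`, the space `J(X)` of
max-min measures and the space `I(X)` of max-plus (idempotent) measures, both
with the weak* topology, are homeomorphic. -/
theorem maxMin_homeomorph_maxPlus
    (X : Type*) [TopologicalSpace X] [CompactSpace X]
    [TopologicalSpace.MetrizableSpace X] :
    Nonempty ({μ : C(X, ℝ) → ℝ // IsMaxMinMeasure μ} ≃ₜ
      {μ : C(X, ℝ) → ℝ // IsMaxPlusMeasure μ}) := by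
 
  rcases isEmpty_or_nonempty X with hX | hX
  · -- the degenerate case : both spaces are empty
    have hconst : (ContinuousMap.const X (0:ℝ)) = ContinuousMap.const X 1 :=
      ContinuousMap.ext fun x => (IsEmpty.elim hX x)
    haveI hJ : IsEmpty {μ : C(X, ℝ) → ℝ // IsMaxMinMeasure μ} := by
      refine ⟨fun j => ?_⟩
      have h0 := j.2.1 0
      have h1 := j.2.1 1
      rw [hconst] at h0
      rw [h0] at h1
      norm_num at h1
    haveI hI : IsEmpty {μ : C(X, ℝ) → ℝ // IsMaxPlusMeasure μ} := by
      refine ⟨fun i => ?_⟩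
      have h0 := i.2.1 0
      have h1 := i.2.1 1
      rw [hconst] at h0
      rw [h0] at h1
      norm_num at h1
    exact ⟨Homeomorph.empty⟩
  · letI : MetricSpace X := TopologicalSpace.metrizableSpaceMetric X
    exact ⟨MMIP0.mainHomeo⟩
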